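/- arXiv:1603.03653 — 3 statements merged into one kernel-verified Lean document; each statement's English description precedes it below -/
import Mathlib

section
/- Let T(x,y) count reducible r-canonical secondary structures with minimum arc-length λ and let S(x,y) count all such structures. Then S(x,y) − T(x,y) = (x²y)^r/(1 − x²y) · (T(x,y) − Σ_{i=0}^{λ−2} x^i). -/
open PowerSeries

/-- `M` is an `r`-canonical RNA secondary structure on vertices `1,…,n` with minimum
arc-length `lam`. -/
def IsCanSecStr (n lam r : ℕ) (M : Finset (ℕ × ℕ)) : Prop :=
  (∀ p ∈ M, 1 ≤ p.1 ∧ p.1 + lam ≤ p.2 ∧ p.2 ≤ n) ∧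
  (∀ p ∈ M, ∀ q ∈ M, p ≠ q → p.1 ≠ q.1 ∧ p.1 ≠ q.2 ∧ p.2 ≠ q.1 ∧ p.2 ≠ q.2) ∧
  (∀ p ∈ M, ∀ q ∈ M, ¬ (p.1 < q.1 ∧ q.1 < p.2 ∧ p.2 < q.2)) ∧
  (∀ p ∈ M, (p.1 - 1, p.2 + 1) ∉ M → ∀ t < r, (p.1 + t, p.2 - t) ∈ M)

/-- A structure on `1,…,n` is reducible if it contains no rainbow, i.e. no arc `(1,n)`. -/
def IsReducible (n : ℕ) (M : Finset (ℕ × ℕ)) : Prop :=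
  ∀ p ∈ M, ¬ (p.1 = 1 ∧ p.2 = n)

noncomputable def sCount (lam r n l : ℕ) : ℕ :=
  Nat.card {M : Finset (ℕ × ℕ) // IsCanSecStr n lam r M ∧ M.card = l}

noncomputable def tCount (lam r n l : ℕ) : ℕ :=
  Nat.card {M : Finset (ℕ × ℕ) // IsCanSecStr n lam r M ∧ IsReducible n M ∧ M.card = l}

/-- `S(x,y)`, the generating function of all `r`-canonical structures. -/
noncomputable def Sgf (lam r : ℕ) : PowerSeries (Polynomial ℚ) :=
  PowerSeries.mk fun n =>
    ∑ l ∈ Finset.range (n + 1), Polynomial.C ((sCount lam r n l : ℚ)) * Polynomial.X ^ l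

/-- `T(x,y)`, the generating function of reducible `r`-canonical structures. -/
noncomputable def Tgf (lam r : ℕ) : PowerSeries (Polynomial ℚ) :=
  PowerSeries.mk fun n =>
    ∑ l ∈ Finset.range (n + 1), Polynomial.C ((tCount lam r n l : ℚ)) * Polynomial.X ^ l

/-- The monomial `x²y`. -/
noncomputable def xxy : PowerSeries (Polynomial ℚ) :=
  PowerSeries.X ^ 2 * PowerSeries.C (Polynomial.X : Polynomial ℚ)


namespace SecStrAux

lemma isReducible_iff {n : ℕ} {M : Finset (ℕ × ℕ)} : IsReducible n M ↔ (1, n) ∉ M := by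
  constructor
  · intro h hm
    exact h _ hm ⟨rfl, rfl⟩
  · rintro h ⟨a, b⟩ hp ⟨rfl, rfl⟩
    exact h hp

/-- Sets of structures we count. -/
def sSet (lam r n j : ℕ) : Set (Finset (ℕ × ℕ)) :=
  {M | IsCanSecStr n lam r M ∧ M.card = j}

def tSet (lam r n j : ℕ) : Set (Finset (ℕ × ℕ)) :=
  {M | IsCanSecStr n lam r M ∧ (1, n) ∉ M ∧ M.card = j}

def uSet (lam r n j : ℕ) : Set (Finset (ℕ × ℕ)) :=
  {M | IsCanSecStr n lam r M ∧ (1, n) ∈ M ∧ M.card = j}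

def aSet (lam r n j : ℕ) : Set (Finset (ℕ × ℕ)) :=
  {M | IsCanSecStr n lam r M ∧ (1, n) ∈ M ∧ (r + 1, n - r) ∈ M ∧ M.card = j}

def bSet (lam r n j : ℕ) : Set (Finset (ℕ × ℕ)) :=
  {M | IsCanSecStr n lam r M ∧ (1, n) ∈ M ∧ (r + 1, n - r) ∉ M ∧ M.card = j}

lemma canSet_finite (lam r n : ℕ) : {M : Finset (ℕ × ℕ) | IsCanSecStr n lam r M}.Finite := by
  apply Set.Finite.subset
    ((Finset.Icc 1 n ×ˢ Finset.Icc 1 n).powerset : Finset (Finset (ℕ × ℕ))).finite_toSet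
  intro M hM
  simp only [Finset.coe_powerset, Set.mem_preimage, Set.mem_powerset_iff, Finset.coe_subset,
    Finset.mem_coe, Finset.mem_powerset]
  intro p hp
  obtain ⟨h1, h2, h3⟩ := hM.1 p hp
  exact Finset.mem_product.2 ⟨Finset.mem_Icc.2 ⟨h1, by omega⟩, Finset.mem_Icc.2 ⟨by omega, h3⟩⟩

lemma sSet_finite (lam r n j : ℕ) : (sSet lam r n j).Finite :=
  (canSet_finite lam r n).subset fun _ h => h.1

lemma tSet_finite (lam r n j : ℕ) : (tSet lam r n j).Finite :=
  (canSet_finite lam r n).subset fun _ h => h.1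

lemma uSet_finite (lam r n j : ℕ) : (uSet lam r n j).Finite :=
  (canSet_finite lam r n).subset fun _ h => h.1

lemma stack_of_rainbow {lam r n : ℕ} {M : Finset (ℕ × ℕ)} (hc : IsCanSecStr n lam r M)
    (hrb : (1, n) ∈ M) : ∀ t < r, (1 + t, n - t) ∈ M := by
  intro t ht
  have h0 : ((1 : ℕ) - 1, n + 1) ∉ M := by
    intro hm
    have := (hc.1 _ hm).1
    simp at this
  exact hc.2.2.2 (1, n) hrb h0 t ht

lemma card_le {lam r n : ℕ} {M : Finset (ℕ × ℕ)} (hlam : 1 ≤ lam)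
    (hc : IsCanSecStr n lam r M) : M.card ≤ n := by
  have h : M.card ≤ (Finset.Icc 1 n).card := by
    apply Finset.card_le_card_of_injOn (fun p => p.1)
    · intro p hp
      obtain ⟨h1, h2, h3⟩ := hc.1 p hp
      exact Finset.mem_Icc.2 ⟨h1, by dsimp only; omega⟩
    · intro p hp q hq hpq
      by_contra hne
      exact (hc.2.1 p (by exact hp) q (by exact hq) hne).1 hpq
  simpa using h

end SecStrAux

namespace SecStrAux

lemma mem_image_sub {d : ℕ} {N : Finset (ℕ × ℕ)} (hN : ∀ p ∈ N, d ≤ p.1 ∧ d ≤ p.2) (x : ℕ × ℕ) :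
    x ∈ N.image (fun p => (p.1 - d, p.2 - d)) ↔ (x.1 + d, x.2 + d) ∈ N := by
  constructor
  · intro hx
    obtain ⟨p, hp, he⟩ := Finset.mem_image.1 hx
    obtain ⟨h1, h2⟩ := hN p hp
    have h3 : (x.1 + d, x.2 + d) = p := by
      obtain ⟨a, b⟩ := p
      obtain ⟨c, e⟩ := x
      simp only [Prod.mk.injEq] at he ⊢
      simp only at h1 h2
      omega
    rw [h3]; exact hp
  · intro hx
    exact Finset.mem_image.2 ⟨_, hx, by simp⟩

lemma mem_image_add {d : ℕ} {N : Finset (ℕ × ℕ)} (x : ℕ × ℕ) :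
    x ∈ N.image (fun p => (p.1 + d, p.2 + d)) ↔ d ≤ x.1 ∧ d ≤ x.2 ∧ (x.1 - d, x.2 - d) ∈ N := by
  constructor
  · intro hx
    obtain ⟨p, hp, he⟩ := Finset.mem_image.1 hx
    obtain ⟨a, b⟩ := p
    obtain ⟨c, e⟩ := x
    simp only [Prod.mk.injEq] at he
    refine ⟨by omega, by omega, ?_⟩
    have h3 : ((c - d : ℕ), (e - d : ℕ)) = (a, b) := by
      simp only [Prod.mk.injEq]; omega
    rw [h3]; exact hp
  · rintro ⟨h1, h2, h3⟩
    refine Finset.mem_image.2 ⟨_, h3, ?_⟩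
    obtain ⟨c, e⟩ := x
    simp only [Prod.mk.injEq]
    constructor <;> omega

lemma add_inj (d : ℕ) : Function.Injective (fun p : ℕ × ℕ => (p.1 + d, p.2 + d)) := by
  rintro ⟨a, b⟩ ⟨c, e⟩ h
  simp only [Prod.mk.injEq] at h ⊢
  omega

lemma image_sub_card {d : ℕ} {N : Finset (ℕ × ℕ)} (hN : ∀ p ∈ N, d ≤ p.1 ∧ d ≤ p.2) :
    (N.image (fun p => (p.1 - d, p.2 - d))).card = N.card := by
  apply Finset.card_image_of_injOn
  intro p hp q hq he
  obtain ⟨h1, h2⟩ := hN p hp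
  obtain ⟨h3, h4⟩ := hN q hq
  obtain ⟨a, b⟩ := p; obtain ⟨c, e⟩ := q
  simp only [Prod.mk.injEq] at he ⊢
  simp only at h1 h2 h3 h4
  omega

lemma image_sub_image_add {d : ℕ} (N : Finset (ℕ × ℕ)) :
    ((N.image (fun p : ℕ × ℕ => (p.1 + d, p.2 + d))).image
      (fun p : ℕ × ℕ => (p.1 - d, p.2 - d))) = N := by
  rw [Finset.image_image]
  have : ((fun p : ℕ × ℕ => (p.1 - d, p.2 - d)) ∘ fun p : ℕ × ℕ => (p.1 + d, p.2 + d)) = id := by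
    funext p
    simp
  rw [this, Finset.image_id]

lemma image_add_image_sub {d : ℕ} {N : Finset (ℕ × ℕ)} (hN : ∀ p ∈ N, d ≤ p.1 ∧ d ≤ p.2) :
    ((N.image (fun p : ℕ × ℕ => (p.1 - d, p.2 - d))).image
      (fun p : ℕ × ℕ => (p.1 + d, p.2 + d))) = N := by
  rw [Finset.image_image]
  rw [Finset.image_congr (g := id), Finset.image_id]
  intro p hp
  have := hN p hp
  obtain ⟨a, b⟩ := p
  simp only [Function.comp_apply, Prod.mk.injEq, id_eq]
  simp only at this
  constructor <;> omega

/-- emptiness : irreducible structures need `n + 1 ≥ 2r + lam`. -/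
lemma uSet_empty_small {lam r n j : ℕ} (hlam : 1 ≤ lam) (hr : 1 ≤ r)
    (hn : n + 1 < 2 * r + lam) : uSet lam r n j = ∅ := by
  ext M
  simp only [uSet, Set.mem_setOf_eq, Set.mem_empty_iff_false, iff_false]
  rintro ⟨hc, hrb, -⟩
  have hm := stack_of_rainbow hc hrb (r - 1) (by omega)
  have := hc.1 _ hm
  simp only at this
  omega

/-- emptiness : irreducible structures need at least `r` arcs. -/
lemma uSet_empty_few {lam r n j : ℕ} (hj : j < r) : uSet lam r n j = ∅ := by
  ext M
  simp only [uSet, Set.mem_setOf_eq, Set.mem_empty_iff_false, iff_false]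
  rintro ⟨hc, hrb, hcard⟩
  have hsub : (Finset.range r).image (fun t => (1 + t, n - t)) ⊆ M := by
    intro x hx
    obtain ⟨t, ht, rfl⟩ := Finset.mem_image.1 hx
    exact stack_of_rainbow hc hrb t (Finset.mem_range.1 ht)
  have hcard2 : ((Finset.range r).image (fun t => (1 + t, n - t))).card = r := by
    rw [Finset.card_image_of_injective _ ?_, Finset.card_range]
    intro s t h
    simp only [Prod.mk.injEq] at h
    omega
  have := Finset.card_le_card hsub
  omega

lemma tSet_zero (lam r n : ℕ) : tSet lam r n 0 = {∅} := by
  ext M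
  simp only [tSet, Set.mem_setOf_eq, Set.mem_singleton_iff, Finset.card_eq_zero]
  constructor
  · rintro ⟨-, -, h⟩; exact h
  · rintro rfl
    refine ⟨⟨?_, ?_, ?_, ?_⟩, ?_, rfl⟩ <;> simp

lemma tSet_empty_small {lam r n j : ℕ} (hn : n + 1 < lam) (hj : 1 ≤ j) :
    tSet lam r n j = ∅ := by
  ext M
  simp only [tSet, Set.mem_setOf_eq, Set.mem_empty_iff_false, iff_false]
  rintro ⟨hc, -, hcard⟩
  have hne : M.Nonempty := Finset.card_pos.1 (by omega)
  obtain ⟨p, hp⟩ := hne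
  have := hc.1 p hp
  omega

end SecStrAux

namespace SecStrAux

variable {lam r : ℕ}

/-- Peeling off the outermost arc of an irreducible structure whose outer stack
has length at least `r+1`. -/
lemma bij1_down (hlam : 1 ≤ lam) (hr : 1 ≤ r) {n j : ℕ} {M : Finset (ℕ × ℕ)}
    (hM : M ∈ aSet lam r (n + 2) (j + 1)) :
    (M.erase (1, n + 2)).image (fun p : ℕ × ℕ => (p.1 - 1, p.2 - 1)) ∈ uSet lam r n j := by
  obtain ⟨hc, hrb, hx, hcard⟩ := hM
  obtain ⟨c1, c2, c3, c4⟩ := hc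
  set N := M.erase (1, n + 2) with hNdef
  have memN : ∀ x : ℕ × ℕ, x ∈ N ↔ x ∈ M ∧ x ≠ (1, n + 2) := by
    intro x; rw [hNdef, Finset.mem_erase]; tauto
  have hNb : ∀ p ∈ N, 2 ≤ p.1 ∧ p.1 + lam ≤ p.2 ∧ p.2 ≤ n + 1 := by
    intro p hp
    obtain ⟨hpM, hne⟩ := (memN p).1 hp
    have h1 := c1 p hpM
    have h2 := c2 p hpM (1, n + 2) hrb hne
    simp only at h2
    omega
  set D := N.image (fun p : ℕ × ℕ => (p.1 - 1, p.2 - 1)) with hDdef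
  have memD : ∀ x : ℕ × ℕ, x ∈ D ↔ (x.1 + 1, x.2 + 1) ∈ N := by
    intro x
    exact mem_image_sub (fun p hp => ⟨by have := hNb p hp; omega, by have := hNb p hp; omega⟩) x
  have hstk : ∀ t < r, (1 + t, n + 2 - t) ∈ M := stack_of_rainbow ⟨c1, c2, c3, c4⟩ hrb
  refine ⟨⟨?_, ?_, ?_, ?_⟩, ?_, ?_⟩
  · -- C1
    rintro ⟨a, b⟩ hq
    rw [memD] at hq
    have := hNb _ hq
    simp only at this ⊢
    omega
  · -- C2
    rintro ⟨a, b⟩ hq ⟨c, d⟩ hq' hne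
    rw [memD] at hq hq'
    have hb1 := hNb _ hq
    have hb2 := hNb _ hq'
    have hne' : ((a : ℕ) + 1, b + 1) ≠ (c + 1, d + 1) := by
      simp only [Ne, Prod.mk.injEq] at hne ⊢
      omega
    have := c2 _ (((memN _).1 hq).1) _ (((memN _).1 hq').1) hne'
    simp only at this ⊢
    omega
  · -- C3
    rintro ⟨a, b⟩ hq ⟨c, d⟩ hq'
    rw [memD] at hq hq'
    have hb1 := hNb _ hq
    have hb2 := hNb _ hq'
    have := c3 _ (((memN _).1 hq).1) _ (((memN _).1 hq').1)
    simp only at this ⊢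
    omega
  · -- C4
    rintro ⟨a, b⟩ hq hpar t ht
    rw [memD] at hq
    obtain ⟨hqM, hqne⟩ := (memN _).1 hq
    have hb1 := hNb _ hq
    simp only at hb1
    simp only at hpar
    rw [memD] at hpar
    simp only at hpar
    -- hpar : (a - 1 + 1, b + 1 + 1) ∉ N
    have hpar' : ((a : ℕ), b + 2) ∉ N := by
      have : ((a : ℕ) - 1 + 1, b + 1 + 1) = (a, b + 2) := by
        rw [Prod.mk.injEq]; omega
      rwa [this] at hpar
    rw [memD]
    by_cases hcase : ((a : ℕ), b + 2) ∈ M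
    · -- parent of (a+1,b+1) is (a, b+2) = (1, n+2), so (a,b) = (1,n)
      have heq : ((a : ℕ), b + 2) = (1, n + 2) := by
        by_contra hne2
        exact hpar' ((memN _).2 ⟨hcase, hne2⟩)
      rw [Prod.mk.injEq] at heq
      -- need (a + t + 1, b - t + 1) ∈ N, use stack depth t+1
      have hmem : (1 + (t + 1), n + 2 - (t + 1)) ∈ M := by
        rcases Nat.lt_or_ge (t + 1) r with h | h
        · exact hstk (t + 1) h
        · have h2 : t + 1 = r := by omega
          have h3 : ((1 : ℕ) + (t + 1), n + 2 - (t + 1)) = (r + 1, n + 2 - r) := by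
            rw [Prod.mk.injEq]; omega
          rw [h3]; exact hx
      have hbnd := c1 _ hmem
      simp only at hbnd
      have heq2 : ((a : ℕ) + t + 1, b - t + 1) = (1 + (t + 1), n + 2 - (t + 1)) := by
        rw [Prod.mk.injEq]; omega
      show ((a : ℕ) + t + 1, b - t + 1) ∈ N
      rw [heq2, memN]
      refine ⟨hmem, ?_⟩
      intro hcontra
      rw [Prod.mk.injEq] at hcontra
      omega
    · -- parent of (a+1, b+1) not in M, use C4 of M (marker)
      have hparM : ((a : ℕ) + 1 - 1, b + 1 + 1) ∉ M := by
        have h3 : ((a : ℕ) + 1 - 1, b + 1 + 1) = (a, b + 2) := by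
          rw [Prod.mk.injEq]; omega
        rwa [h3]
      have hmem := c4 _ hqM hparM t ht
      simp only at hmem
      have hbnd := c1 _ hmem
      simp only at hbnd
      have heq2 : ((a : ℕ) + t + 1, b - t + 1) = (a + 1 + t, b + 1 - t) := by
        rw [Prod.mk.injEq]; omega
      show ((a : ℕ) + t + 1, b - t + 1) ∈ N
      rw [heq2, memN]
      refine ⟨hmem, ?_⟩
      intro hcontra
      rw [Prod.mk.injEq] at hcontra
      omega
  · -- rainbow (1, n) ∈ D
    rw [memD]
    have hmem : (1 + 1, n + 2 - 1) ∈ M := by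
      rcases Nat.lt_or_ge 1 r with h | h
      · exact hstk 1 h
      · have hr1 : r = 1 := by omega
        have h3 : ((1 : ℕ) + 1, n + 2 - 1) = (r + 1, n + 2 - r) := by
          rw [hr1]
        rw [h3]; exact hx
    show ((1 : ℕ) + 1, n + 1) ∈ N
    rw [memN]
    constructor
    · have h3 : ((1 : ℕ) + 1, n + 1) = (1 + 1, n + 2 - 1) := by
        rw [Prod.mk.injEq]; omega
      rw [h3]; exact hmem
    · intro hcontra
      rw [Prod.mk.injEq] at hcontra
      omega
  · -- card
    have h1 : D.card = N.card :=
      image_sub_card (fun p hp => ⟨by have := hNb p hp; omega, by have := hNb p hp; omega⟩)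
    have h2 : N.card = M.card - 1 := Finset.card_erase_of_mem hrb
    omega

end SecStrAux

namespace SecStrAux

lemma bij1_up (hlam : 1 ≤ lam) (hr : 1 ≤ r) {n j : ℕ} {M' : Finset (ℕ × ℕ)}
    (hM' : M' ∈ uSet lam r n j) :
    insert (1, n + 2) (M'.image (fun p : ℕ × ℕ => (p.1 + 1, p.2 + 1)))
      ∈ aSet lam r (n + 2) (j + 1) := by
  obtain ⟨⟨c1, c2, c3, c4⟩, hrb, hcard⟩ := hM'
  set E := M'.image (fun p : ℕ × ℕ => (p.1 + 1, p.2 + 1)) with hEdef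
  have memE : ∀ x : ℕ × ℕ, x ∈ E ↔ 1 ≤ x.1 ∧ 1 ≤ x.2 ∧ (x.1 - 1, x.2 - 1) ∈ M' :=
    fun x => mem_image_add x
  have memF : ∀ x : ℕ × ℕ, x ∈ insert (1, n + 2) E ↔ x = (1, n + 2) ∨ x ∈ E :=
    fun x => Finset.mem_insert
  have hrbE : ((1 : ℕ), n + 2) ∉ E := by
    rw [memE]
    rintro ⟨-, -, hmem⟩
    have := c1 _ hmem
    simp only at this
    omega
  have hlamn : 1 + lam ≤ n := by
    have := c1 _ hrb
    simp only at this
    omega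
  have hstk : ∀ t < r, (1 + t, n - t) ∈ M' := stack_of_rainbow ⟨c1, c2, c3, c4⟩ hrb
  have hEb : ∀ x ∈ E, 2 ≤ x.1 ∧ x.1 + lam ≤ x.2 ∧ x.2 ≤ n + 1 := by
    intro x hx
    obtain ⟨h1, h2, h3⟩ := (memE x).1 hx
    have := c1 _ h3
    simp only at this
    omega
  refine ⟨⟨?_, ?_, ?_, ?_⟩, ?_, ?_, ?_⟩
  · -- C1
    rintro ⟨a, b⟩ hq
    rcases (memF _).1 hq with h | h
    · rw [Prod.mk.injEq] at h
      simp only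
      omega
    · have := hEb _ h
      simp only at this ⊢
      omega
  · -- C2
    rintro ⟨a, b⟩ hq ⟨c, d⟩ hq' hne
    rcases (memF _).1 hq with h | h <;> rcases (memF _).1 hq' with h' | h'
    · exact absurd (h.trans h'.symm) hne
    · rw [Prod.mk.injEq] at h
      have hb := hEb _ h'
      have hb2 := (memE _).1 h'
      have hlow : lam + 2 ≤ (c, d).2 := by
        have := c1 _ hb2.2.2
        simp only at this hb2
        omega
      simp only at hb hlow ⊢
      omega
    · rw [Prod.mk.injEq] at h'
      have hb := hEb _ h
      have hb2 := (memE _).1 h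
      have hlow : lam + 2 ≤ (a, b).2 := by
        have := c1 _ hb2.2.2
        simp only at this hb2
        omega
      simp only at hb hlow ⊢
      omega
    · have hb1 := (memE _).1 h
      have hb2 := (memE _).1 h'
      simp only at hb1 hb2
      obtain ⟨ha1, ha2, hmem1⟩ := hb1
      obtain ⟨hc1', hc2', hmem2⟩ := hb2
      have hne' : ((a : ℕ) - 1, b - 1) ≠ (c - 1, d - 1) := by
        intro hcontra
        rw [Prod.mk.injEq] at hcontra
        apply hne
        rw [Prod.mk.injEq]
        omega
      have := c2 _ hmem1 _ hmem2 hne'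
      have hx1 := c1 _ hmem1
      have hx2 := c1 _ hmem2
      simp only at this hx1 hx2 ⊢
      omega
  · -- C3
    rintro ⟨a, b⟩ hq ⟨c, d⟩ hq'
    rcases (memF _).1 hq with h | h <;> rcases (memF _).1 hq' with h' | h'
    · rw [Prod.mk.injEq] at h h'
      simp only
      omega
    · rw [Prod.mk.injEq] at h
      have hb := hEb _ h'
      simp only at hb ⊢
      omega
    · rw [Prod.mk.injEq] at h'
      have hb := hEb _ h
      simp only at hb ⊢
      omega
    · have hb1 := (memE _).1 h
      have hb2 := (memE _).1 h'
      simp only at hb1 hb2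
      obtain ⟨ha1, ha2, hmem1⟩ := hb1
      obtain ⟨hc1', hc2', hmem2⟩ := hb2
      have := c3 _ hmem1 _ hmem2
      have hx1 := c1 _ hmem1
      have hx2 := c1 _ hmem2
      simp only at this hx1 hx2 ⊢
      omega
  · -- C4
    rintro ⟨a, b⟩ hq hpar t ht
    rcases (memF _).1 hq with h | h
    · -- x = (1, n+2)
      rw [Prod.mk.injEq] at h
      obtain ⟨ha, hb⟩ := h
      rcases Nat.eq_zero_or_pos t with h0 | h0
      · subst h0
        rw [memF]
        left
        rw [Prod.mk.injEq]
        simp only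
        omega
      · -- use M' stack at depth t - 1
        have hmem := hstk (t - 1) (by omega)
        have hbnd := c1 _ hmem
        simp only at hbnd
        rw [memF]
        right
        rw [memE]
        simp only
        refine ⟨by omega, by omega, ?_⟩
        have heq : ((a : ℕ) + t - 1, b - t - 1) = (1 + (t - 1), n - (t - 1)) := by
          rw [Prod.mk.injEq]
          omega
        rw [heq]
        exact hmem
    · -- x ∈ E
      have hb1 := (memE _).1 h
      simp only at hb1
      obtain ⟨ha1, ha2, hmem1⟩ := hb1
      have hx1 := c1 _ hmem1
      simp only at hx1
      -- parent of (a-1, b-1) in M' would contradict hpar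
      have hparM : ((a : ℕ) - 1 - 1, b - 1 + 1) ∉ M' := by
        intro hcontra
        apply hpar
        rw [memF]
        right
        rw [memE]
        simp only
        have hbnd2 := c1 _ hcontra
        simp only at hbnd2
        refine ⟨by omega, by omega, ?_⟩
        have heq : ((a : ℕ) - 1 - 1, b + 1 - 1) = (a - 1 - 1, b - 1 + 1) := by
          rw [Prod.mk.injEq]; omega
        rw [heq]
        exact hcontra
      have hmem := c4 _ hmem1 hparM t ht
      simp only at hmem
      have hbnd := c1 _ hmem
      simp only at hbnd
      rw [memF]
      right
      rw [memE]
      simp only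
      refine ⟨by omega, by omega, ?_⟩
      have heq : ((a : ℕ) + t - 1, b - t - 1) = (a - 1 + t, b - 1 - t) := by
        rw [Prod.mk.injEq]; omega
      rw [heq]
      exact hmem
  · -- rainbow
    exact Finset.mem_insert_self _ _
  · -- the extra arc (r+1, n+2-r)
    rw [memF]
    right
    rw [memE]
    have hmem := hstk (r - 1) (by omega)
    have hbnd := c1 _ hmem
    simp only at hbnd
    simp only
    refine ⟨by omega, by omega, ?_⟩
    have heq : ((r : ℕ) + 1 - 1, n + 2 - r - 1) = (1 + (r - 1), n - (r - 1)) := by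
      rw [Prod.mk.injEq]; omega
    rw [heq]
    exact hmem
  · -- card
    rw [Finset.card_insert_of_notMem hrbE, hEdef,
      Finset.card_image_of_injective _ (add_inj 1), hcard]

end SecStrAux

namespace SecStrAux

lemma bij1_card (hlam : 1 ≤ lam) (hr : 1 ≤ r) (n j : ℕ) :
    (aSet lam r (n + 2) (j + 1)).ncard = (uSet lam r n j).ncard := by
  rw [← Nat.card_coe_set_eq, ← Nat.card_coe_set_eq]
  apply Nat.card_congr
  refine
    { toFun := fun M =>
        ⟨(M.1.erase (1, n + 2)).image (fun p : ℕ × ℕ => (p.1 - 1, p.2 - 1)),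
          bij1_down hlam hr M.2⟩
      invFun := fun M' =>
        ⟨insert (1, n + 2) (M'.1.image (fun p : ℕ × ℕ => (p.1 + 1, p.2 + 1))),
          bij1_up hlam hr M'.2⟩
      left_inv := ?_
      right_inv := ?_ }
  · rintro ⟨M, hM⟩
    apply Subtype.ext
    simp only
    obtain ⟨hc, hrb, hx, hcard⟩ := hM
    have hNb : ∀ p ∈ M.erase (1, n + 2), 1 ≤ p.1 ∧ 1 ≤ p.2 := by
      intro p hp
      have h1 := hc.1 p (Finset.mem_of_mem_erase hp)
      omega
    rw [image_add_image_sub hNb, Finset.insert_erase hrb]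
  · rintro ⟨M', hM'⟩
    apply Subtype.ext
    simp only
    have hrbE : ((1 : ℕ), n + 2) ∉ M'.image (fun p : ℕ × ℕ => (p.1 + 1, p.2 + 1)) := by
      rw [mem_image_add]
      rintro ⟨-, -, hmem⟩
      have := hM'.1.1 _ hmem
      simp only at this
      omega
    rw [Finset.erase_insert hrbE, image_sub_image_add]

end SecStrAux

namespace SecStrAux

/-- The outer stack of length `r` on `1, …, m + 2r`. -/
def stk (r m : ℕ) : Finset (ℕ × ℕ) :=
  (Finset.range r).image (fun t => (1 + t, m + 2 * r - t))

lemma mem_stk {r m : ℕ} (x : ℕ × ℕ) :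
    x ∈ stk r m ↔ ∃ t, t < r ∧ (1 + t, m + 2 * r - t) = x := by
  simp only [stk, Finset.mem_image, Finset.mem_range]

lemma stk_card (r m : ℕ) : (stk r m).card = r := by
  rw [stk, Finset.card_image_of_injective _ ?_, Finset.card_range]
  intro s t h
  rw [Prod.mk.injEq] at h
  omega

/-- The squeeze lemma: in a structure on `m + 2r` containing the whole outer stack,
every non-stack arc lies strictly inside the stack. -/
lemma squeeze {lam r m : ℕ} (hlam : 1 ≤ lam) (hr : 1 ≤ r) {M : Finset (ℕ × ℕ)}
    (hc : IsCanSecStr (m + 2 * r) lam r M) (hrb : (1, m + 2 * r) ∈ M) :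
    ∀ p ∈ M, p ∉ stk r m → r + 1 ≤ p.1 ∧ p.1 + lam ≤ p.2 ∧ p.2 ≤ m + r := by
  obtain ⟨c1, c2, c3, c4⟩ := hc
  have hstk' : ∀ t < r, (1 + t, m + 2 * r - t) ∈ M :=
    stack_of_rainbow ⟨c1, c2, c3, c4⟩ hrb
  rintro ⟨a, b⟩ hp hnstk
  have hb := c1 _ hp
  simp only at hb
  have ha : r + 1 ≤ a := by
    by_contra hlt
    push_neg at hlt
    have hs := hstk' (a - 1) (by omega)
    have hne : ((a : ℕ), b) ≠ (1 + (a - 1), m + 2 * r - (a - 1)) := by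
      intro hcontra
      exact hnstk ((mem_stk _).2 ⟨a - 1, by omega, hcontra.symm⟩)
    have := c2 _ hp _ hs hne
    simp only at this
    omega
  have ha2 : a ≤ m + r := by
    by_contra hlt
    push_neg at hlt
    have hs := hstk' (m + 2 * r - a) (by omega)
    have hne : ((a : ℕ), b) ≠ (1 + (m + 2 * r - a), m + 2 * r - (m + 2 * r - a)) := by
      intro hcontra
      exact hnstk ((mem_stk _).2 ⟨m + 2 * r - a, by omega, hcontra.symm⟩)
    have := c2 _ hp _ hs hne
    simp only at this
    omega
  have hsin := hstk' (r - 1) (by omega)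
  have hne : ((1 : ℕ) + (r - 1), m + 2 * r - (r - 1)) ≠ (a, b) := by
    intro hcontra
    rw [Prod.mk.injEq] at hcontra
    omega
  have h2 := c2 _ hsin _ hp hne
  have h3 := c3 _ hsin _ hp
  simp only at h2 h3 ⊢
  omega

lemma bij2_down (hlam : 1 ≤ lam) (hr : 1 ≤ r) {m l : ℕ} {M : Finset (ℕ × ℕ)}
    (hM : M ∈ bSet lam r (m + 2 * r) (l + r)) :
    (M \ stk r m).image (fun p : ℕ × ℕ => (p.1 - r, p.2 - r)) ∈ tSet lam r m l := by
  obtain ⟨hc, hrb, hx0, hcard⟩ := hM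
  have hxx : ((r : ℕ) + 1, m + r) ∉ M := by
    have he : ((r : ℕ) + 1, m + 2 * r - r) = (r + 1, m + r) := by
      rw [Prod.mk.injEq]; omega
    rwa [he] at hx0
  obtain ⟨c1, c2, c3, c4⟩ := hc
  have hstk' : ∀ t < r, (1 + t, m + 2 * r - t) ∈ M :=
    stack_of_rainbow ⟨c1, c2, c3, c4⟩ hrb
  have hStkM : stk r m ⊆ M := by
    intro x hxm
    obtain ⟨t, ht, he⟩ := (mem_stk x).1 hxm
    rw [← he]
    exact hstk' t ht
  set N := M \ stk r m with hNdef
  have memN : ∀ x : ℕ × ℕ, x ∈ N ↔ x ∈ M ∧ x ∉ stk r m := fun x => Finset.mem_sdiff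
  have hNb : ∀ p ∈ N, r + 1 ≤ p.1 ∧ p.1 + lam ≤ p.2 ∧ p.2 ≤ m + r := by
    intro p hp
    obtain ⟨h1, h2⟩ := (memN p).1 hp
    exact squeeze hlam hr ⟨c1, c2, c3, c4⟩ hrb p h1 h2
  set D := N.image (fun p : ℕ × ℕ => (p.1 - r, p.2 - r)) with hDdef
  have memD : ∀ x : ℕ × ℕ, x ∈ D ↔ (x.1 + r, x.2 + r) ∈ N := by
    intro x
    exact mem_image_sub (fun p hp => ⟨by have := hNb p hp; omega, by have := hNb p hp; omega⟩) x
  refine ⟨⟨?_, ?_, ?_, ?_⟩, ?_, ?_⟩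
  · -- C1
    rintro ⟨a, b⟩ hq
    rw [memD] at hq
    have := hNb _ hq
    simp only at this ⊢
    omega
  · -- C2
    rintro ⟨a, b⟩ hq ⟨c, d⟩ hq' hne
    rw [memD] at hq hq'
    have hb1 := hNb _ hq
    have hb2 := hNb _ hq'
    have hne' : ((a : ℕ) + r, b + r) ≠ (c + r, d + r) := by
      intro hcontra
      rw [Prod.mk.injEq] at hcontra
      apply hne
      rw [Prod.mk.injEq]
      omega
    have := c2 _ (((memN _).1 hq).1) _ (((memN _).1 hq').1) hne'
    simp only at this hb1 hb2 ⊢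
    omega
  · -- C3
    rintro ⟨a, b⟩ hq ⟨c, d⟩ hq'
    rw [memD] at hq hq'
    have hb1 := hNb _ hq
    have hb2 := hNb _ hq'
    have := c3 _ (((memN _).1 hq).1) _ (((memN _).1 hq').1)
    simp only at this hb1 hb2 ⊢
    omega
  · -- C4
    rintro ⟨a, b⟩ hq hpar t ht
    rw [memD] at hq
    obtain ⟨hqM, hqnstk⟩ := (memN _).1 hq
    have hb1 := hNb _ hq
    simp only at hb1
    rw [memD] at hpar
    simp only at hpar
    have hpar' : ((a : ℕ) + r - 1, b + r + 1) ∉ N := by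
      have he : ((a : ℕ) - 1 + r, b + 1 + r) = (a + r - 1, b + r + 1) := by
        rw [Prod.mk.injEq]; omega
      rwa [he] at hpar
    rw [memD]
    by_cases hcase : ((a : ℕ) + r - 1, b + r + 1) ∈ M
    · -- that parent must be a stack arc, forcing the excluded arc (r+1, m+r) ∈ M
      exfalso
      have hnstk2 : ((a : ℕ) + r - 1, b + r + 1) ∉ stk r m := by
        intro hmem
        obtain ⟨s, hs, he⟩ := (mem_stk _).1 hmem
        rw [Prod.mk.injEq] at he
        -- a + r - 1 = 1 + s ≤ r forces a = 1, s = r - 1, then b = m, so (a+r,b+r) = (r+1, m+r)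
        have ha1 : a = 1 ∧ s = r - 1 := by omega
        have hbm : b = m := by omega
        apply hxx
        have he2 : ((r : ℕ) + 1, m + r) = (a + r, b + r) := by
          rw [Prod.mk.injEq]; omega
        rw [he2]
        exact hqM
      exact hpar' ((memN _).2 ⟨hcase, hnstk2⟩)
    · have hparM : ((a : ℕ) + r - 1, b + r + 1) ∉ M := hcase
      have hmem := c4 _ hqM hparM t ht
      simp only at hmem
      have hbnd := c1 _ hmem
      simp only at hbnd
      have hnstk3 : ((a : ℕ) + r + t, b + r - t) ∉ stk r m := by
        intro hmem2
        obtain ⟨s, hs, he⟩ := (mem_stk _).1 hmem2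
        rw [Prod.mk.injEq] at he
        omega
      have he2 : ((a : ℕ) + t + r, b - t + r) = (a + r + t, b + r - t) := by
        rw [Prod.mk.injEq]; omega
      show ((a : ℕ) + t + r, b - t + r) ∈ N
      rw [he2, memN]
      exact ⟨hmem, hnstk3⟩
  · -- reducible : (1, m) ∉ D
    rw [memD]
    intro hmem
    obtain ⟨h1, -⟩ := (memN _).1 hmem
    apply hxx
    have he : ((r : ℕ) + 1, m + r) = ((1 : ℕ) + r, m + r) := by
      rw [Prod.mk.injEq]; omega
    rw [he]
    exact h1
  · -- card
    have h1 : D.card = N.card :=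
      image_sub_card (fun p hp => ⟨by have := hNb p hp; omega, by have := hNb p hp; omega⟩)
    have h2 : N.card = M.card - (stk r m).card := Finset.card_sdiff_of_subset hStkM
    rw [stk_card] at h2
    omega

end SecStrAux

namespace SecStrAux

lemma bij2_up (hlam : 1 ≤ lam) (hr : 1 ≤ r) {m l : ℕ} (hm1 : lam ≤ m + 1)
    {M' : Finset (ℕ × ℕ)} (hM' : M' ∈ tSet lam r m l) :
    stk r m ∪ M'.image (fun p : ℕ × ℕ => (p.1 + r, p.2 + r))
      ∈ bSet lam r (m + 2 * r) (l + r) := by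
  obtain ⟨⟨c1, c2, c3, c4⟩, hred, hcard⟩ := hM'
  set E := M'.image (fun p : ℕ × ℕ => (p.1 + r, p.2 + r)) with hEdef
  have memE : ∀ x : ℕ × ℕ, x ∈ E ↔ r ≤ x.1 ∧ r ≤ x.2 ∧ (x.1 - r, x.2 - r) ∈ M' :=
    fun x => mem_image_add x
  have memF : ∀ x : ℕ × ℕ, x ∈ stk r m ∪ E ↔ x ∈ stk r m ∨ x ∈ E :=
    fun x => Finset.mem_union
  have hEb : ∀ x ∈ E, r + 1 ≤ x.1 ∧ x.1 + lam ≤ x.2 ∧ x.2 ≤ m + r := by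
    intro x hx
    obtain ⟨h1, h2, h3⟩ := (memE x).1 hx
    have := c1 _ h3
    simp only at this
    omega
  have hdisj : Disjoint (stk r m) E := by
    rw [Finset.disjoint_left]
    intro x hx1 hx2
    obtain ⟨t, ht, he⟩ := (mem_stk x).1 hx1
    have := hEb x hx2
    rw [← he] at this
    simp only at this
    omega
  refine ⟨⟨?_, ?_, ?_, ?_⟩, ?_, ?_, ?_⟩
  · -- C1
    intro p hp
    rcases (memF _).1 hp with h | h
    · obtain ⟨t, ht, he⟩ := (mem_stk p).1 h
      rw [← he]
      simp only
      omega
    · have := hEb _ h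
      omega
  · -- C2
    intro p hp q hq hne
    rcases (memF _).1 hp with h | h <;> rcases (memF _).1 hq with h' | h'
    · obtain ⟨t, ht, he⟩ := (mem_stk p).1 h
      obtain ⟨s, hs, he'⟩ := (mem_stk q).1 h'
      have hne2 : t ≠ s := by
        intro hcontra
        apply hne
        rw [← he, ← he', hcontra]
      rw [← he, ← he']
      simp only
      omega
    · obtain ⟨t, ht, he⟩ := (mem_stk p).1 h
      have := hEb _ h'
      rw [← he]
      simp only
      omega
    · obtain ⟨s, hs, he'⟩ := (mem_stk q).1 h'
      have := hEb _ h
      rw [← he']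
      simp only
      omega
    · obtain ⟨h1, h2, hmem1⟩ := (memE _).1 h
      obtain ⟨h1', h2', hmem2⟩ := (memE _).1 h'
      have hne' : (p.1 - r, p.2 - r) ≠ (q.1 - r, q.2 - r) := by
        intro hcontra
        rw [Prod.mk.injEq] at hcontra
        apply hne
        rw [Prod.ext_iff]
        omega
      have := c2 _ hmem1 _ hmem2 hne'
      simp only at this
      omega
  · -- C3
    intro p hp q hq
    rcases (memF _).1 hp with h | h <;> rcases (memF _).1 hq with h' | h'
    · obtain ⟨t, ht, he⟩ := (mem_stk p).1 h
      obtain ⟨s, hs, he'⟩ := (mem_stk q).1 h'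
      rw [← he, ← he']
      simp only
      omega
    · obtain ⟨t, ht, he⟩ := (mem_stk p).1 h
      have := hEb _ h'
      rw [← he]
      simp only
      omega
    · obtain ⟨s, hs, he'⟩ := (mem_stk q).1 h'
      have := hEb _ h
      rw [← he']
      simp only
      omega
    · obtain ⟨h1, h2, hmem1⟩ := (memE _).1 h
      obtain ⟨h1', h2', hmem2⟩ := (memE _).1 h'
      have := c3 _ hmem1 _ hmem2
      have hx1 := c1 _ hmem1
      have hx2 := c1 _ hmem2
      simp only at this hx1 hx2
      omega
  · -- C4
    rintro ⟨pa, pb⟩ hp hpar t ht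
    have hpar' : ((pa : ℕ) - 1, pb + 1) ∉ stk r m ∪ E := hpar
    show ((pa : ℕ) + t, pb - t) ∈ stk r m ∪ E
    rcases (memF _).1 hp with h | h
    · obtain ⟨s, hs, he⟩ := (mem_stk _).1 h
      rw [Prod.mk.injEq] at he
      rcases Nat.eq_zero_or_pos s with h0 | h0
      · -- p is the rainbow
        rw [memF]
        left
        rw [mem_stk]
        refine ⟨t, ht, ?_⟩
        rw [Prod.mk.injEq]
        omega
      · -- p has a parent in the stack: contradiction with hpar
        exfalso
        apply hpar'
        rw [memF]
        left
        rw [mem_stk]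
        refine ⟨s - 1, by omega, ?_⟩
        rw [Prod.mk.injEq]
        omega
    · obtain ⟨h1, h2, hmem1⟩ := (memE _).1 h
      simp only at h1 h2 hmem1
      have hx1 := c1 _ hmem1
      simp only at hx1
      have hparM : ((pa : ℕ) - r - 1, pb - r + 1) ∉ M' := by
        intro hcontra
        apply hpar'
        rw [memF]
        right
        rw [memE]
        have hbnd2 := c1 _ hcontra
        simp only at hbnd2
        refine ⟨by omega, by omega, ?_⟩
        have heq : ((pa : ℕ) - 1 - r, pb + 1 - r) = (pa - r - 1, pb - r + 1) := by
          rw [Prod.mk.injEq]; omega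
        rw [heq]
        exact hcontra
      have hmem := c4 _ hmem1 hparM t ht
      have hbnd := c1 _ hmem
      simp only at hbnd hmem
      rw [memF]
      right
      rw [memE]
      refine ⟨by omega, by omega, ?_⟩
      have heq : ((pa : ℕ) + t - r, pb - t - r) = (pa - r + t, pb - r - t) := by
        rw [Prod.mk.injEq]; omega
      rw [heq]
      exact hmem
  · -- rainbow
    rw [memF]
    left
    rw [mem_stk]
    exact ⟨0, by omega, by rw [Prod.mk.injEq]; omega⟩
  · -- excluded arc (r+1, m + 2r - r)
    rw [memF]
    rintro (h | h)
    · obtain ⟨s, hs, he⟩ := (mem_stk _).1 h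
      rw [Prod.mk.injEq] at he
      omega
    · obtain ⟨h1, h2, hmem⟩ := (memE _).1 h
      simp only at h1 h2 hmem
      apply hred
      have heq : ((1 : ℕ), m) = (r + 1 - r, m + 2 * r - r - r) := by
        rw [Prod.mk.injEq]; omega
      rw [heq]
      exact hmem
  · -- card
    rw [Finset.card_union_of_disjoint hdisj, stk_card, hEdef,
      Finset.card_image_of_injective _ (add_inj r), hcard]
    omega

lemma bij2_card (hlam : 1 ≤ lam) (hr : 1 ≤ r) {m : ℕ} (hm1 : lam ≤ m + 1) (l : ℕ) :
    (bSet lam r (m + 2 * r) (l + r)).ncard = (tSet lam r m l).ncard := by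
  rw [← Nat.card_coe_set_eq, ← Nat.card_coe_set_eq]
  apply Nat.card_congr
  refine
    { toFun := fun M =>
        ⟨(M.1 \ stk r m).image (fun p : ℕ × ℕ => (p.1 - r, p.2 - r)),
          bij2_down hlam hr M.2⟩
      invFun := fun M' =>
        ⟨stk r m ∪ M'.1.image (fun p : ℕ × ℕ => (p.1 + r, p.2 + r)),
          bij2_up hlam hr hm1 M'.2⟩
      left_inv := ?_
      right_inv := ?_ }
  · rintro ⟨M, hM⟩
    apply Subtype.ext
    simp only
    obtain ⟨hc, hrb, hx0, hcard⟩ := hM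
    have hStkM : stk r m ⊆ M := by
      intro x hxm
      obtain ⟨t, ht, he⟩ := (mem_stk x).1 hxm
      rw [← he]
      exact stack_of_rainbow hc hrb t ht
    have hNb : ∀ p ∈ M \ stk r m, r ≤ p.1 ∧ r ≤ p.2 := by
      intro p hp
      rw [Finset.mem_sdiff] at hp
      have := squeeze hlam hr hc hrb p hp.1 hp.2
      omega
    rw [image_add_image_sub hNb, Finset.union_sdiff_of_subset hStkM]
  · rintro ⟨M', hM'⟩
    apply Subtype.ext
    simp only
    have hdisj : Disjoint (stk r m) (M'.image (fun p : ℕ × ℕ => (p.1 + r, p.2 + r))) := by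
      rw [Finset.disjoint_left]
      rintro ⟨xa, xb⟩ hx1 hx2
      obtain ⟨t, ht, he⟩ := (mem_stk _).1 hx1
      obtain ⟨h1, h2, hmem⟩ := (mem_image_add _).1 hx2
      rw [Prod.mk.injEq] at he
      have h1' : r ≤ xa := h1
      have h3 : 1 ≤ xa - r ∧ xa - r + lam ≤ xb - r ∧ xb - r ≤ m := hM'.1.1 _ hmem
      omega
    rw [Finset.union_sdiff_cancel_left hdisj, image_sub_image_add]

end SecStrAux

namespace SecStrAux

variable {lam r : ℕ}

lemma sCount_eq (lam r n l : ℕ) : sCount lam r n l = (sSet lam r n l).ncard := by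
  rw [sCount, ← Nat.card_coe_set_eq]
  rfl

lemma tCount_eq (lam r n l : ℕ) : tCount lam r n l = (tSet lam r n l).ncard := by
  rw [tCount, ← Nat.card_coe_set_eq]
  apply Nat.card_congr
  apply Equiv.subtypeEquivRight
  intro M
  show _ ↔ M ∈ {M | IsCanSecStr n lam r M ∧ (1, n) ∉ M ∧ M.card = l}
  rw [Set.mem_setOf_eq, isReducible_iff]

lemma sCount_split (lam r n l : ℕ) :
    sCount lam r n l = tCount lam r n l + (uSet lam r n l).ncard := by
  rw [sCount_eq, tCount_eq]
  have h := Set.ncard_inter_add_ncard_diff_eq_ncard (sSet lam r n l)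
    {M : Finset (ℕ × ℕ) | (1, n) ∈ M} (sSet_finite lam r n l)
  have h1 : sSet lam r n l ∩ {M : Finset (ℕ × ℕ) | (1, n) ∈ M} = uSet lam r n l := by
    ext M
    simp only [sSet, uSet, Set.mem_inter_iff, Set.mem_setOf_eq]
    tauto
  have h2 : sSet lam r n l \ {M : Finset (ℕ × ℕ) | (1, n) ∈ M} = tSet lam r n l := by
    ext M
    simp only [sSet, tSet, Set.mem_diff, Set.mem_setOf_eq]
    tauto
  rw [h1, h2] at h
  omega

lemma uSet_split (lam r n j : ℕ) :
    (uSet lam r n j).ncard = (aSet lam r n j).ncard + (bSet lam r n j).ncard := by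
  have h := Set.ncard_inter_add_ncard_diff_eq_ncard (uSet lam r n j)
    {M : Finset (ℕ × ℕ) | (r + 1, n - r) ∈ M} (uSet_finite lam r n j)
  have h1 : uSet lam r n j ∩ {M : Finset (ℕ × ℕ) | (r + 1, n - r) ∈ M} = aSet lam r n j := by
    ext M
    simp only [uSet, aSet, Set.mem_inter_iff, Set.mem_setOf_eq]
    tauto
  have h2 : uSet lam r n j \ {M : Finset (ℕ × ℕ) | (r + 1, n - r) ∈ M} = bSet lam r n j := by
    ext M
    simp only [uSet, bSet, Set.mem_diff, Set.mem_setOf_eq]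
    tauto
  rw [h1, h2] at h
  omega

lemma uSet_empty_big (hlam : 1 ≤ lam) {n j : ℕ} (h : n < j) : uSet lam r n j = ∅ := by
  ext M
  simp only [uSet, Set.mem_setOf_eq, Set.mem_empty_iff_false, iff_false]
  rintro ⟨hc, -, hcard⟩
  have := card_le hlam hc
  omega

lemma tSet_empty_big (hlam : 1 ≤ lam) {n j : ℕ} (h : n < j) : tSet lam r n j = ∅ := by
  ext M
  simp only [tSet, Set.mem_setOf_eq, Set.mem_empty_iff_false, iff_false]
  rintro ⟨hc, -, hcard⟩
  have := card_le hlam hc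
  omega

lemma sSet_empty_big (hlam : 1 ≤ lam) {n j : ℕ} (h : n < j) : sSet lam r n j = ∅ := by
  ext M
  simp only [sSet, Set.mem_setOf_eq, Set.mem_empty_iff_false, iff_false]
  rintro ⟨hc, hcard⟩
  have := card_le hlam hc
  omega

/-- The master counting identity. -/
lemma key (hlam : 1 ≤ lam) (hr : 1 ≤ r) (n j : ℕ) :
    (uSet lam r n j).ncard
      + (if 2 * r ≤ n ∧ n + 1 < 2 * r + lam ∧ j = r then 1 else 0)
    = (if 2 ≤ n ∧ 1 ≤ j then (SecStrAux.uSet lam r (n - 2) (j - 1)).ncard else 0)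
      + (if 2 * r ≤ n ∧ r ≤ j then (tSet lam r (n - 2 * r) (j - r)).ncard else 0) := by
  by_cases h1 : 2 * r ≤ n ∧ r ≤ j
  · obtain ⟨hn, hj⟩ := h1
    obtain ⟨m, rfl⟩ : ∃ m, n = m + 2 * r := ⟨n - 2 * r, by omega⟩
    obtain ⟨l, rfl⟩ : ∃ l, j = l + r := ⟨j - r, by omega⟩
    have e1 : m + 2 * r - 2 * r = m := by omega
    have e2 : l + r - r = l := by omega
    rw [if_pos (⟨hn, hj⟩ : 2 * r ≤ m + 2 * r ∧ r ≤ l + r), e1, e2]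
    by_cases h2 : lam ≤ m + 1
    · -- main case : use both bijections
      have hC1 : ¬(2 * r ≤ m + 2 * r ∧ m + 2 * r + 1 < 2 * r + lam ∧ l + r = r) := by omega
      have hC2 : 2 ≤ m + 2 * r ∧ 1 ≤ l + r := by omega
      rw [if_neg hC1, if_pos hC2]
      have hsplit := uSet_split lam r (m + 2 * r) (l + r)
      have hb := bij2_card hlam hr h2 l
      have ha := bij1_card hlam hr (m + 2 * r - 2) (l + r - 1)
      have e3 : (m + 2 * r - 2) + 2 = m + 2 * r := by omega
      have e4 : (l + r - 1) + 1 = l + r := by omega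
      rw [e3, e4] at ha
      omega
    · -- degenerate case : the window is too small for any arc
      push_neg at h2
      have hu : (uSet lam r (m + 2 * r) (l + r)).ncard = 0 := by
        rw [uSet_empty_small hlam hr (by omega)]
        exact Set.ncard_empty _
      have hu2 : (uSet lam r (m + 2 * r - 2) (l + r - 1)).ncard = 0 := by
        rw [uSet_empty_small hlam hr (by omega)]
        exact Set.ncard_empty _
      have hC2 : 2 ≤ m + 2 * r ∧ 1 ≤ l + r := by omega
      rw [if_pos hC2, hu, hu2]
      rcases Nat.eq_zero_or_pos l with rfl | hl
      · have hC1 : 2 * r ≤ m + 2 * r ∧ m + 2 * r + 1 < 2 * r + lam ∧ 0 + r = r := by omega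
        rw [if_pos hC1, tSet_zero, Set.ncard_singleton]
      · have hC1 : ¬(2 * r ≤ m + 2 * r ∧ m + 2 * r + 1 < 2 * r + lam ∧ l + r = r) := by omega
        rw [if_neg hC1, tSet_empty_small (show m + 1 < lam by omega) (show 1 ≤ l by omega),
          Set.ncard_empty]
  · push_neg at h1
    have hC1 : ¬(2 * r ≤ n ∧ n + 1 < 2 * r + lam ∧ j = r) := by
      rintro ⟨ha, -, rfl⟩
      exact absurd (h1 ha) (by omega)
    have hC3 : ¬(2 * r ≤ n ∧ r ≤ j) := by
      rintro ⟨ha, hb⟩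
      exact absurd (h1 ha) (by omega)
    rw [if_neg hC1, if_neg hC3]
    have hu : (uSet lam r n j).ncard = 0 := by
      rcases Nat.lt_or_ge n (2 * r) with h | h
      · rw [uSet_empty_small hlam hr (by omega)]
        exact Set.ncard_empty _
      · rw [uSet_empty_few (h1 h)]
        exact Set.ncard_empty _
    rw [hu]
    by_cases h3 : 2 ≤ n ∧ 1 ≤ j
    · rw [if_pos h3]
      have hu2 : (SecStrAux.uSet lam r (n - 2) (j - 1)).ncard = 0 := by
        rcases Nat.lt_or_ge n (2 * r) with h | h
        · rw [uSet_empty_small hlam hr (by omega)]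
          exact Set.ncard_empty _
        · rw [uSet_empty_few (show j - 1 < r by have := h1 h; omega)]
          exact Set.ncard_empty _
      rw [hu2]
    · rw [if_neg h3]

end SecStrAux

namespace SecStrAux

variable {lam r : ℕ}

lemma coeff_polysum (f : ℕ → ℚ) (n j : ℕ) (hf : ∀ k, n < k → f k = 0) :
    (∑ l ∈ Finset.range (n + 1), Polynomial.C (f l) * Polynomial.X ^ l).coeff j = f j := by
  rw [Polynomial.finset_sum_coeff]
  simp only [Polynomial.coeff_C_mul, Polynomial.coeff_X_pow]
  rw [Finset.sum_eq_single j]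
  · simp
  · intro b _ hbj
    simp [Ne.symm hbj]
  · intro hj
    rw [Finset.mem_range, not_lt] at hj
    simp [hf j (by omega)]

lemma sCount_big (hlam : 1 ≤ lam) {n k : ℕ} (h : n < k) : sCount lam r n k = 0 := by
  rw [sCount_eq, sSet_empty_big hlam h, Set.ncard_empty]

lemma tCount_big (hlam : 1 ≤ lam) {n k : ℕ} (h : n < k) : tCount lam r n k = 0 := by
  rw [tCount_eq, tSet_empty_big hlam h, Set.ncard_empty]

lemma coeff_Sgf (hlam : 1 ≤ lam) (n j : ℕ) :
    (PowerSeries.coeff n (Sgf lam r)).coeff j = (sCount lam r n j : ℚ) := by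
  rw [Sgf, PowerSeries.coeff_mk]
  exact coeff_polysum _ n j fun k hk => by rw [sCount_big hlam hk, Nat.cast_zero]

lemma coeff_Tgf (hlam : 1 ≤ lam) (n j : ℕ) :
    (PowerSeries.coeff n (Tgf lam r)).coeff j = (tCount lam r n j : ℚ) := by
  rw [Tgf, PowerSeries.coeff_mk]
  exact coeff_polysum _ n j fun k hk => by rw [tCount_big hlam hk, Nat.cast_zero]

lemma coeff_xxypow_mul (F : PowerSeries (Polynomial ℚ)) (k n : ℕ) :
    PowerSeries.coeff n (xxy ^ k * F)
      = if 2 * k ≤ n then Polynomial.X ^ k * PowerSeries.coeff (n - 2 * k) F else 0 := by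
  have hx : xxy ^ k
      = PowerSeries.C (Polynomial.X ^ k : Polynomial ℚ) * PowerSeries.X ^ (2 * k) := by
    unfold xxy
    rw [mul_pow, ← pow_mul, map_pow]
    ring
  rw [hx, mul_assoc, PowerSeries.coeff_C_mul,
    mul_comm ((PowerSeries.X : PowerSeries (Polynomial ℚ)) ^ (2 * k)) F,
    PowerSeries.coeff_mul_X_pow']
  split_ifs with h
  · rfl
  · rw [mul_zero]

lemma coeff_P (n : ℕ) :
    PowerSeries.coeff (R := Polynomial ℚ) n
        (∑ i ∈ Finset.range (lam - 1), PowerSeries.X ^ i)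
      = if n < lam - 1 then 1 else 0 := by
  rw [map_sum]
  simp only [PowerSeries.coeff_X_pow]
  rw [Finset.sum_ite_eq]
  simp [Finset.mem_range]

lemma isUnit_one_sub_xxy : IsUnit ((1 : PowerSeries (Polynomial ℚ)) - xxy) := by
  rw [PowerSeries.isUnit_iff_constantCoeff]
  have h : PowerSeries.constantCoeff (R := Polynomial ℚ) (1 - xxy) = 1 := by
    unfold xxy
    rw [map_sub, map_one, map_mul, map_pow, PowerSeries.constantCoeff_X]
    ring
  rw [h]
  exact isUnit_one

/-- The nested-ite restatement of the key identity. -/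
lemma key' (hlam : 1 ≤ lam) (hr : 1 ≤ r) (n j : ℕ) :
    (uSet lam r n j).ncard
      + (if 2 * r ≤ n then if r ≤ j then
          (if n - 2 * r < lam - 1 then (if j - r = 0 then 1 else 0) else 0) else 0 else 0)
    = (if 2 ≤ n then if 1 ≤ j then (SecStrAux.uSet lam r (n - 2) (j - 1)).ncard else 0 else 0)
      + (if 2 * r ≤ n then if r ≤ j then tCount lam r (n - 2 * r) (j - r) else 0 else 0) := by
  have k := key hlam hr n j
  rw [← tCount_eq] at k
  have hind : (if 2 * r ≤ n ∧ n + 1 < 2 * r + lam ∧ j = r then 1 else 0)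
      = (if 2 * r ≤ n then if r ≤ j then
          (if n - 2 * r < lam - 1 then (if j - r = 0 then 1 else 0) else 0) else 0 else 0) := by
    by_cases h1 : 2 * r ≤ n
    · by_cases h2 : r ≤ j
      · by_cases h3 : n - 2 * r < lam - 1
        · by_cases h4 : j - r = 0
          · rw [if_pos (by omega : 2 * r ≤ n ∧ n + 1 < 2 * r + lam ∧ j = r),
              if_pos h1, if_pos h2, if_pos h3, if_pos h4]
          · rw [if_neg (by omega : ¬(2 * r ≤ n ∧ n + 1 < 2 * r + lam ∧ j = r)),
              if_pos h1, if_pos h2, if_pos h3, if_neg h4]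
        · rw [if_neg (by omega : ¬(2 * r ≤ n ∧ n + 1 < 2 * r + lam ∧ j = r)),
            if_pos h1, if_pos h2, if_neg h3]
      · rw [if_neg (by omega : ¬(2 * r ≤ n ∧ n + 1 < 2 * r + lam ∧ j = r)),
          if_pos h1, if_neg h2]
    · rw [if_neg (by omega : ¬(2 * r ≤ n ∧ n + 1 < 2 * r + lam ∧ j = r)), if_neg h1]
  rw [hind, ite_and, ite_and] at k
  exact k

lemma ite_sub_dist (c : Prop) [Decidable c] (a b : ℚ) :
    (if c then a - b else 0) = (if c then a else 0) - (if c then b else 0) := by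
  split_ifs <;> simp

end SecStrAux

namespace SecStrAux

lemma coeff_Xpow_mul (Q : Polynomial ℚ) (k j : ℕ) :
    (Polynomial.X ^ k * Q).coeff j = if k ≤ j then Q.coeff (j - k) else 0 := by
  rw [mul_comm, Polynomial.coeff_mul_X_pow']

end SecStrAux


/-- `S(x,y) − T(x,y) = (x²y)^r/(1 − x²y) · (T(x,y) − Σ_{i=0}^{λ−2} x^i)`. -/
theorem Sgf_sub_Tgf (lam r : ℕ) (hlam : 1 ≤ lam) (hr : 1 ≤ r) :
    Sgf lam r - Tgf lam r =
      xxy ^ r * Ring.inverse (1 - xxy) *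
        (Tgf lam r - ∑ i ∈ Finset.range (lam - 1), PowerSeries.X ^ i) := by
  classical
  have hunit := SecStrAux.isUnit_one_sub_xxy
  have hmain : (1 - xxy) * (Sgf lam r - Tgf lam r)
      = xxy ^ r * (Tgf lam r - ∑ i ∈ Finset.range (lam - 1), PowerSeries.X ^ i) := by
    ext n j
    rw [sub_mul, one_mul, map_sub]
    have h1 : PowerSeries.coeff n (xxy * (Sgf lam r - Tgf lam r))
        = if 2 * 1 ≤ n then Polynomial.X ^ 1 *
            PowerSeries.coeff (n - 2 * 1) (Sgf lam r - Tgf lam r) else 0 := by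
      rw [← pow_one xxy]
      exact SecStrAux.coeff_xxypow_mul _ 1 n
    rw [h1, SecStrAux.coeff_xxypow_mul]
    simp only [map_sub, Polynomial.coeff_sub, mul_one,
      apply_ite (fun p : Polynomial ℚ => Polynomial.coeff p j),
      SecStrAux.coeff_Xpow_mul, Polynomial.coeff_zero,
      SecStrAux.coeff_Sgf hlam, SecStrAux.coeff_Tgf hlam, SecStrAux.coeff_P,
      apply_ite (fun p : Polynomial ℚ => Polynomial.coeff p (j - r)),
      Polynomial.coeff_one]
    have kq : ((SecStrAux.uSet lam r n j).ncard : ℚ)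
          + (if 2 * r ≤ n then if r ≤ j then
              (if n - 2 * r < lam - 1 then (if j - r = 0 then (1 : ℚ) else 0) else 0)
              else 0 else 0)
        = (if 2 ≤ n then if 1 ≤ j then ((SecStrAux.uSet lam r (n - 2) (j - 1)).ncard : ℚ) else 0 else 0)
          + (if 2 * r ≤ n then if r ≤ j then (tCount lam r (n - 2 * r) (j - r) : ℚ)
              else 0 else 0) := by
      exact_mod_cast SecStrAux.key' hlam hr n j
    have hs1 : (sCount lam r n j : ℚ)
        = (tCount lam r n j : ℚ) + ((SecStrAux.uSet lam r n j).ncard : ℚ) := by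
      exact_mod_cast SecStrAux.sCount_split lam r n j
    have hs2 : (sCount lam r (n - 2) (j - 1) : ℚ)
        = (tCount lam r (n - 2) (j - 1) : ℚ) + ((SecStrAux.uSet lam r (n - 2) (j - 1)).ncard : ℚ) := by
      exact_mod_cast SecStrAux.sCount_split lam r (n - 2) (j - 1)
    rw [hs1, hs2]
    simp only [add_sub_cancel_left]
    simp only [SecStrAux.ite_sub_dist]
    linarith [kq]
  calc Sgf lam r - Tgf lam r
      = Ring.inverse (1 - xxy) * ((1 - xxy) * (Sgf lam r - Tgf lam r)) := by
        rw [← mul_assoc, Ring.inverse_mul_cancel _ hunit, one_mul]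
    _ = Ring.inverse (1 - xxy)
          * (xxy ^ r * (Tgf lam r - ∑ i ∈ Finset.range (lam - 1), PowerSeries.X ^ i)) := by
        rw [hmain]
    _ = xxy ^ r * Ring.inverse (1 - xxy)
          * (Tgf lam r - ∑ i ∈ Finset.range (lam - 1), PowerSeries.X ^ i) := by
        ring
end

section
/- Let s_p(n) be the number of r-canonical secondary structures of length n with minimum arc-length λ admitting a compatible RY-sequence with ⌊pn⌋ purines, and let s(n,l) be the number of such structures with l arcs. Then a structure with l arcs admits such a compatible sequence if and only if l ≤ min(⌊pn⌋, ⌈(1−p)n⌉); consequently s_p(n) = Σ_{l=0}^{min(⌊pn⌋,⌈(1−p)n⌉)} s(n,l). -/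
/-- `f : {1,…,n} → {R,Y}` (with `true` = purine R, `false` = pyrimidine Y) is a compatible
RY-sequence for `M` with exactly `m` purines: the endpoints of each arc carry different
letters, and exactly `m` of the `n` positions carry the letter R. -/
def IsCompatibleRY (n m : ℕ) (M : Finset (ℕ × ℕ)) (f : ℕ → Bool) : Prop :=
  (∀ p ∈ M, f p.1 ≠ f p.2) ∧ ((Finset.Icc 1 n).filter fun v => f v = true).card = m

open Finset

/-- A structure with `l` arcs admits a compatible RY-sequence with `⌊pn⌋` purines iff
`l ≤ min(⌊pn⌋, ⌈(1−p)n⌉)`; consequently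
`s_p(n) = Σ_{l=0}^{min(⌊pn⌋,⌈(1−p)n⌉)} s(n,l)`. -/
theorem compatible_RY_characterization (n lam r : ℕ) (hlam : 1 ≤ lam) (hr : 1 ≤ r)
    (p : ℝ) (hp0 : 0 < p) (hp1 : p < 1) :
    (∀ M : Finset (ℕ × ℕ), ∀ l : ℕ, IsCanSecStr n lam r M → M.card = l →
      ((∃ f : ℕ → Bool, IsCompatibleRY n (⌊p * n⌋₊) M f) ↔
        l ≤ min ⌊p * n⌋₊ ⌈(1 - p) * n⌉₊)) ∧
    Nat.card {M : Finset (ℕ × ℕ) // IsCanSecStr n lam r M ∧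
        ∃ f : ℕ → Bool, IsCompatibleRY n (⌊p * n⌋₊) M f} =
      ∑ l ∈ Finset.range (min ⌊p * n⌋₊ ⌈(1 - p) * n⌉₊ + 1),
        Nat.card {M : Finset (ℕ × ℕ) // IsCanSecStr n lam r M ∧ M.card = l} := by
  classical
  set m := ⌊p * n⌋₊ with hm
  have hn0 : (0:ℝ) ≤ (n:ℝ) := Nat.cast_nonneg n
  have hmn : m ≤ n := by
    have h : p * n ≤ (n:ℝ) := by nlinarith
    calc m ≤ ⌊(n:ℝ)⌋₊ := Nat.floor_le_floor h
      _ = n := Nat.floor_natCast n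
  have hfl : (m:ℝ) ≤ p * n := Nat.floor_le (by positivity)
  have hceil : ⌈(1 - p) * n⌉₊ = n - m := by
    have h1 : ⌈(1 - p) * n⌉₊ ≤ n - m := by
      rw [Nat.ceil_le, Nat.cast_sub hmn]
      nlinarith
    have h2 : n - m ≤ ⌈(1 - p) * n⌉₊ := by
      have hlt : p * n < m + 1 := Nat.lt_floor_add_one _
      have hle : ((1 - p) * n : ℝ) ≤ ⌈(1 - p) * n⌉₊ := Nat.le_ceil _
      have hc : (n:ℝ) < (m:ℝ) + 1 + (⌈(1 - p) * n⌉₊ : ℝ) := by nlinarith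
      have : n < m + 1 + ⌈(1 - p) * n⌉₊ := by exact_mod_cast hc
      omega
    omega
  have key : ∀ M : Finset (ℕ × ℕ), IsCanSecStr n lam r M →
      ((∃ f : ℕ → Bool, IsCompatibleRY n m M f) ↔ M.card ≤ m ∧ M.card ≤ n - m) := by
    intro M hM
    obtain ⟨h1, h2, _h3, _h4⟩ := hM
    constructor
    · rintro ⟨f, hf, hcard⟩
      have hF : ((Icc 1 n).filter fun v => ¬ f v = true).card = n - m := by
        have h := Finset.card_filter_add_card_filter_not
          (s := Icc 1 n) (p := fun v => f v = true)
        rw [Nat.card_Icc] at h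
        omega
      constructor
      · rw [← hcard]
        apply Finset.card_le_card_of_injOn (fun q => if f q.1 = true then q.1 else q.2)
        · intro q hq
          obtain ⟨hb1, hb2, hb3⟩ := h1 q hq
          have hne := hf q hq
          simp only [Finset.mem_coe, mem_filter, mem_Icc]
          by_cases hb : f q.1 = true
          · rw [if_pos hb]
            exact ⟨⟨hb1, by omega⟩, hb⟩
          · have ht : f q.2 = true := by
              revert hne hb; cases f q.1 <;> cases f q.2 <;> simp
            rw [if_neg hb]
            exact ⟨⟨by omega, hb3⟩, ht⟩
        · intro a ha b hb heq
          by_contra hne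
          obtain ⟨e1, e2, e3, e4⟩ := h2 a ha b hb hne
          dsimp only at heq
          split_ifs at heq <;> omega
      · rw [← hF]
        apply Finset.card_le_card_of_injOn (fun q => if f q.1 = true then q.2 else q.1)
        · intro q hq
          obtain ⟨hb1, hb2, hb3⟩ := h1 q hq
          have hne := hf q hq
          simp only [Finset.mem_coe, mem_filter, mem_Icc]
          by_cases hb : f q.1 = true
          · have ht : ¬ f q.2 = true := by
              revert hne; rw [hb]; cases f q.2 <;> simp
            rw [if_pos hb]
            exact ⟨⟨by omega, hb3⟩, ht⟩
          · rw [if_neg hb]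
            exact ⟨⟨hb1, by omega⟩, hb⟩
        · intro a ha b hb heq
          by_contra hne
          obtain ⟨e1, e2, e3, e4⟩ := h2 a ha b hb hne
          dsimp only at heq
          split_ifs at heq <;> omega
    · rintro ⟨hl1, hl2⟩
      set l := M.card with hl
      have hlm : l + m ≤ n := by omega
      have hltp : ∀ q ∈ M, q.1 < q.2 := fun q hq => by
        have := h1 q hq; omega
      set L := M.image Prod.fst with hL
      set R := M.image Prod.snd with hR
      have hLcard : L.card = l := Finset.card_image_of_injOn (by
        intro a ha b hb hab
        by_contra hne
        exact (h2 a ha b hb hne).1 hab)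
      have hRcard : R.card = l := Finset.card_image_of_injOn (by
        intro a ha b hb hab
        by_contra hne
        exact (h2 a ha b hb hne).2.2.2 hab)
      have hdisj : Disjoint L R := by
        rw [Finset.disjoint_left]
        rintro v hvL hvR
        obtain ⟨a, ha, rfl⟩ := Finset.mem_image.mp hvL
        obtain ⟨b, hb, hb2⟩ := Finset.mem_image.mp hvR
        by_cases hab : a = b
        · subst hab; exact absurd hb2 (by have := hltp a ha; omega)
        · exact (h2 a ha b hb hab).2.1 hb2.symm
      have hsub : L ∪ R ⊆ Icc 1 n := by
        intro v hv
        rcases Finset.mem_union.mp hv with h | h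
        · obtain ⟨a, ha, rfl⟩ := Finset.mem_image.mp h
          have := h1 a ha; rw [mem_Icc]; omega
        · obtain ⟨a, ha, rfl⟩ := Finset.mem_image.mp h
          have := h1 a ha; rw [mem_Icc]; omega
      have hUcard : (Icc 1 n \ (L ∪ R)).card = n - (l + l) := by
        rw [Finset.card_sdiff_of_subset hsub, Finset.card_union_of_disjoint hdisj, hLcard, hRcard,
          Nat.card_Icc]
        omega
      obtain ⟨T, hTU, hTcard⟩ := Finset.exists_subset_card_eq (s := Icc 1 n \ (L ∪ R)) (n := m - l)
        (by omega)
      have hTL : Disjoint L T := by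
        rw [Finset.disjoint_right]
        intro v hv
        have hv' := Finset.mem_sdiff.mp (hTU hv)
        exact fun hvL => hv'.2 (Finset.mem_union_left _ hvL)
      refine ⟨fun v => decide (v ∈ L ∪ T), ?_, ?_⟩
      · intro q hq
        have hq1 : q.1 ∈ L ∪ T := Finset.mem_union_left _ (Finset.mem_image_of_mem _ hq)
        have hq2 : q.2 ∉ L ∪ T := by
          rw [Finset.mem_union]
          rintro (h | h)
          · exact Finset.disjoint_left.mp hdisj h (Finset.mem_image_of_mem _ hq)
          · exact (Finset.mem_sdiff.mp (hTU h)).2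
              (Finset.mem_union_right _ (Finset.mem_image_of_mem _ hq))
        simp [hq1, hq2]
      · have hfe : ((Icc 1 n).filter fun v => decide (v ∈ L ∪ T) = true) = L ∪ T := by
          ext v
          simp only [mem_filter, decide_eq_true_eq]
          constructor
          · exact fun h => h.2
          · intro h
            refine ⟨?_, h⟩
            rcases Finset.mem_union.mp h with h' | h'
            · exact hsub (Finset.mem_union_left _ h')
            · exact (Finset.mem_sdiff.mp (hTU h')).1
        rw [hfe, Finset.card_union_of_disjoint hTL, hLcard, hTcard]
        omega
  constructor
  · intro M l hM hcard
    rw [hceil, ← hcard]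
    exact (key M hM).trans le_min_iff.symm
  · rw [hceil]
    set K := min m (n - m) with hK
    set Ω : Finset (Finset (ℕ × ℕ)) := (Icc 1 n ×ˢ Icc 1 n).powerset with hΩdef
    have hΩ : ∀ M : Finset (ℕ × ℕ), IsCanSecStr n lam r M → M ∈ Ω := by
      intro M hM
      rw [hΩdef, Finset.mem_powerset]
      intro q hq
      have := hM.1 q hq
      rw [Finset.mem_product, mem_Icc, mem_Icc]
      omega
    have hcount : ∀ P : Finset (ℕ × ℕ) → Prop, (∀ M, P M → IsCanSecStr n lam r M) →
        Nat.card {M : Finset (ℕ × ℕ) // P M} = (Ω.filter P).card := by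
      intro P hP
      have e : {M : Finset (ℕ × ℕ) // P M} ≃ {M : Finset (ℕ × ℕ) // M ∈ Ω.filter P} :=
        Equiv.subtypeEquivRight (fun M => by
          rw [Finset.mem_filter]
          exact ⟨fun h => ⟨hΩ M (hP M h), h⟩, fun h => h.2⟩)
      rw [Nat.card_congr e, Nat.card_eq_fintype_card, Fintype.card_coe]
    rw [hcount _ (fun M h => h.1)]
    rw [Finset.sum_congr rfl (fun l _ => hcount (fun M => IsCanSecStr n lam r M ∧ M.card = l)
      (fun M h => h.1))]
    have hpart : (Ω.filter fun M => IsCanSecStr n lam r M ∧ ∃ f, IsCompatibleRY n m M f) =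
        (Finset.range (K + 1)).biUnion
          (fun l => Ω.filter fun M => IsCanSecStr n lam r M ∧ M.card = l) := by
      ext M
      simp only [Finset.mem_filter, Finset.mem_biUnion, Finset.mem_range]
      constructor
      · rintro ⟨hMΩ, hQ, hf⟩
        have hc := (key M hQ).mp hf
        exact ⟨M.card, by omega, hMΩ, hQ, rfl⟩
      · rintro ⟨l, hlK, hMΩ, hQ, hcard⟩
        refine ⟨hMΩ, hQ, (key M hQ).mpr ?_⟩
        omega
    have hdj : ∀ l1 ∈ Finset.range (K + 1), ∀ l2 ∈ Finset.range (K + 1), l1 ≠ l2 →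
        Disjoint
          (Ω.filter fun M => IsCanSecStr n lam r M ∧ M.card = l1)
          (Ω.filter fun M => IsCanSecStr n lam r M ∧ M.card = l2) := by
      intro l1 _ l2 _ hne
      rw [Finset.disjoint_left]
      intro M hM1 hM2
      rw [Finset.mem_filter] at hM1 hM2
      exact absurd (hM1.2.2.symm.trans hM2.2.2) hne
    have main := (congrArg Finset.card hpart).trans (Finset.card_biUnion hdj)
    convert main using 2 with l hl
    · congr!
    · congr!
end

section
/- Let a, u, c, g be nonnegative integers (counts of A, U, C, G) with Watson-Crick and wobble pairing (allowed pairs A-U, C-G, U-G). The maximum of l₁ + l₂ + l₃ over nonnegative integers l₁, l₂, l₃ satisfying l₁ ≤ a, l₁ + l₃ ≤ u, l₂ ≤ c, l₂ + l₃ ≤ g equals min( min(a,u) + g, min(c,g) + u ). -/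
/-- With Watson-Crick and wobble pairing (allowed pairs A-U, C-G, U-G) and nucleotide
counts `a, u, c, g`, the maximum of `l₁ + l₂ + l₃` over nonnegative integers with
`l₁ ≤ a`, `l₁ + l₃ ≤ u`, `l₂ ≤ c`, `l₂ + l₃ ≤ g` equals
`min(min(a,u) + g, min(c,g) + u)`. -/
theorem wobble_ilp_optimum (a u c g : ℕ) :
    IsGreatest {m : ℕ | ∃ l₁ l₂ l₃ : ℕ,
        l₁ ≤ a ∧ l₁ + l₃ ≤ u ∧ l₂ ≤ c ∧ l₂ + l₃ ≤ g ∧ m = l₁ + l₂ + l₃}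
      (min (min a u + g) (min c g + u)) := by
  constructor
  · exact ⟨min a u, min c g, min (u - min a u) (g - min c g), by omega, by omega,
      by omega, by omega, by omega⟩
  · rintro m ⟨l₁, l₂, l₃, h⟩
    omega
end
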